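/- Let r ≥ 3 and let m, l, i, j be natural numbers with i ≥ m + 2 and j ≥ l + 1. Then the quantity q := ((m+2+l)! · (i+j)^r · j! · (i−2)!) / ((m+2+l)^r · (i+j)! · l! · m!) satisfies q ≤ C(r) · (i + j − (m + 2 + l))^r for a constant C(r) depending only on r. -/
import Mathlib


/-- The factorial coefficient bound `q` in the commutator estimate of the
pressure proof: for `r ≥ 3` there is `C(r) > 0` such that for all naturals
`m, l, i, j` with `i ≥ m + 2`, `j ≥ l + 1`,
`q = ((m+2+l)! (i+j)^r j! (i−2)!)/((m+2+l)^r (i+j)! l! m!)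
   ≤ C(r) (i+j−(m+2+l))^r`. -/
theorem stmt_10 (r : ℕ) (hr : 3 ≤ r) :
    ∃ C : ℝ, 0 < C ∧ ∀ m l i j : ℕ, m + 2 ≤ i → l + 1 ≤ j →
      ((Nat.factorial (m + 2 + l) : ℝ) * (i + j : ℝ) ^ r *
          (Nat.factorial j : ℝ) * (Nat.factorial (i - 2) : ℝ)) /
        ((m + 2 + l : ℝ) ^ r * (Nat.factorial (i + j) : ℝ) *
          (Nat.factorial l : ℝ) * (Nat.factorial m : ℝ))
      ≤ C * ((i + j - (m + 2 + l) : ℕ) : ℝ) ^ r := by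
  refine ⟨2 ^ r, by positivity, ?_⟩
  intro m l i j hi hj
  set k := m + 2 + l with hk
  set n := i + j with hn
  have hk2 : 2 ≤ k := by omega
  have hnk : k + 1 ≤ n := by omega
  -- factorial identities
  have f1 : Nat.factorial k = Nat.choose k l * Nat.factorial l * Nat.factorial (m + 2) := by
    have h := Nat.choose_mul_factorial_mul_factorial (show l ≤ k by omega)
    rw [show k - l = m + 2 by omega] at h
    omega
  have f2 : Nat.factorial n = Nat.choose n j * Nat.factorial j * Nat.factorial i := by
    have h := Nat.choose_mul_factorial_mul_factorial (show j ≤ n by omega)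
    rw [show n - j = i by omega] at h
    omega
  have f3 : Nat.factorial i = i * (i - 1) * Nat.factorial (i - 2) := by
    obtain ⟨i', rfl⟩ : ∃ i', i = i' + 2 := ⟨i - 2, by omega⟩
    simp [Nat.factorial_succ]
    ring
  have f4 : Nat.factorial (m + 2) = ((m + 2) * (m + 1)) * Nat.factorial m := by
    simp [Nat.factorial_succ]; ring
  -- choose monotonicity
  have hc : Nat.choose k l ≤ Nat.choose n j := by
    calc Nat.choose k l ≤ Nat.choose (l + i) l :=
          Nat.choose_le_choose l (by omega)
      _ = Nat.choose (l + i) i := by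
          have h := Nat.choose_symm (show l ≤ l + i by omega)
          rw [show l + i - l = i by omega] at h
          exact h.symm
      _ ≤ Nat.choose (j + i) i := Nat.choose_le_choose i (by omega)
      _ = Nat.choose (j + i) j := by
          have h := Nat.choose_symm (show j ≤ j + i by omega)
          rw [show j + i - j = i by omega] at h
          exact h
      _ = Nat.choose n j := by rw [hn, Nat.add_comm]
  have hmi : (m + 2) * (m + 1) ≤ i * (i - 1) :=
    Nat.mul_le_mul (by omega) (by omega)
  -- n ≤ 2k(n-k)
  have hn2 : n ≤ 2 * k * (n - k) := by
    have hd : 1 ≤ n - k := by omega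
    have h1 : k * 1 ≤ k * (n - k) := Nat.mul_le_mul_left k hd
    have h2 : 2 * (n - k) ≤ k * (n - k) := Nat.mul_le_mul_right (n - k) hk2
    have h3 : 2 * k * (n - k) = k * (n - k) + k * (n - k) := by ring
    have h4 : k + (n - k) = n := by omega
    linarith
  have hnr : n ^ r ≤ 2 ^ r * k ^ r * (n - k) ^ r := by
    calc n ^ r ≤ (2 * k * (n - k)) ^ r := Nat.pow_le_pow_left hn2 r
      _ = 2 ^ r * k ^ r * (n - k) ^ r := by rw [mul_pow, mul_pow]
  have big : Nat.choose k l * ((m + 2) * (m + 1)) * n ^ r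
      ≤ Nat.choose n j * (i * (i - 1)) * (2 ^ r * k ^ r * (n - k) ^ r) :=
    Nat.mul_le_mul (Nat.mul_le_mul hc hmi) hnr
  have key : Nat.factorial k * n ^ r * Nat.factorial j * Nat.factorial (i - 2)
      ≤ 2 ^ r * (n - k) ^ r *
        (k ^ r * Nat.factorial n * Nat.factorial l * Nat.factorial m) := by
    calc Nat.factorial k * n ^ r * Nat.factorial j * Nat.factorial (i - 2)
        = (Nat.choose k l * ((m + 2) * (m + 1)) * n ^ r) *
            (Nat.factorial l * Nat.factorial m * Nat.factorial j *
              Nat.factorial (i - 2)) := by rw [f1, f4]; ring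
      _ ≤ (Nat.choose n j * (i * (i - 1)) * (2 ^ r * k ^ r * (n - k) ^ r)) *
            (Nat.factorial l * Nat.factorial m * Nat.factorial j *
              Nat.factorial (i - 2)) := Nat.mul_le_mul big le_rfl
      _ = 2 ^ r * (n - k) ^ r *
            (k ^ r * Nat.factorial n * Nat.factorial l * Nat.factorial m) := by
          rw [f2, f3]; ring
  have hD : (0 : ℝ) < (m + 2 + l : ℝ) ^ r * (Nat.factorial (i + j) : ℝ) *
      (Nat.factorial l : ℝ) * (Nat.factorial m : ℝ) := by positivity
  rw [div_le_iff₀ hD]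
  have key' : ((Nat.factorial k * n ^ r * Nat.factorial j * Nat.factorial (i - 2) : ℕ) : ℝ)
      ≤ ((2 ^ r * (n - k) ^ r *
        (k ^ r * Nat.factorial n * Nat.factorial l * Nat.factorial m) : ℕ) : ℝ) :=
    Nat.cast_le.mpr key
  push_cast at key'
  calc ((Nat.factorial (m + 2 + l) : ℝ) * (i + j : ℝ) ^ r *
          (Nat.factorial j : ℝ) * (Nat.factorial (i - 2) : ℝ))
      = ((Nat.factorial k : ℝ) * (n : ℝ) ^ r *
          (Nat.factorial j : ℝ) * (Nat.factorial (i - 2) : ℝ)) := by push_cast [hk, hn]; ring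
    _ ≤ 2 ^ r * ((n - k : ℕ) : ℝ) ^ r *
          ((k : ℝ) ^ r * (Nat.factorial n : ℝ) * (Nat.factorial l : ℝ) *
            (Nat.factorial m : ℝ)) := by
        convert key' using 2 <;> push_cast <;> ring
    _ = 2 ^ r * ((i + j - (m + 2 + l) : ℕ) : ℝ) ^ r *
          ((m + 2 + l : ℝ) ^ r * (Nat.factorial (i + j) : ℝ) * (Nat.factorial l : ℝ) *
            (Nat.factorial m : ℝ)) := by push_cast [hk, hn]; ring
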